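/- Let A, B, F be random variables on a finite probability space. Suppose F is independent of B and A = g(F) almost surely. Then for every a and b with P(A = a) > 0, P(B = b | A = a) = P(B = b). Conversely, if there exist a, b with P(A = a) > 0 and P(B = b | A = a) ≠ P(B = b), then for every F with A = g(F) a.s., F is dependent on B, and moreover the total variation distance between the conditional law of B given F = f (for f with g(f) = a, averaged appropriately) and the marginal law of B is at least |P(B = b | A = a) - P(B = b)| for some f in the support with g(f) = a. -/

import Mathlib

open Finset Real
open scoped Classical

noncomputable def Pr {Ω : Type*} [Fintype Ω] (p : Ω → ℝ) (E : Ω → Prop) : ℝ :=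
  ∑ ω, if E ω then p ω else 0

def Indep {Ω : Type*} [Fintype Ω] {α β : Type*} (p : Ω → ℝ)
    (F : Ω → α) (B : Ω → β) : Prop :=
  ∀ f b, Pr p (fun ω => F ω = f ∧ B ω = b) =
    Pr p (fun ω => F ω = f) * Pr p (fun ω => B ω = b)

lemma ite_sum' {ι : Type*} {c : Prop} [Decidable c] (s : Finset ι) (h : ι → ℝ) :
    (if c then ∑ x ∈ s, h x else 0) = ∑ x ∈ s, if c then h x else 0 := by
  split <;> simp

section helpers

variable {Ω : Type*} [Fintype Ω] (p : Ω → ℝ)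

lemma Pr_nonneg (hp : ∀ ω, 0 ≤ p ω) (E : Ω → Prop) : 0 ≤ Pr p E :=
  Finset.sum_nonneg fun ω _ => by by_cases h : E ω <;> simp [Pr, h, hp ω]

lemma Pr_congr {E E' : Ω → Prop} (h : ∀ ω, p ω ≠ 0 → (E ω ↔ E' ω)) :
    Pr p E = Pr p E' := by
  unfold Pr
  refine Finset.sum_congr rfl fun ω _ => ?_
  by_cases h0 : p ω = 0
  · simp [h0]
  · simp [h ω h0]

lemma Pr_mono (hp : ∀ ω, 0 ≤ p ω) {E E' : Ω → Prop} (h : ∀ ω, E ω → E' ω) :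
    Pr p E ≤ Pr p E' := by
  refine Finset.sum_le_sum fun ω _ => ?_
  by_cases h0 : E ω
  · simp [h0, h ω h0]
  · by_cases h1 : E' ω <;> simp [h0, h1, hp ω]

lemma Pr_fiber {φ α : Type*} [Fintype φ] (F : Ω → φ) (g : φ → α)
    (C : Ω → Prop) (a : α) :
    Pr p (fun ω => C ω ∧ g (F ω) = a) =
      ∑ f, if g f = a then Pr p (fun ω => C ω ∧ F ω = f) else 0 := by
  unfold Pr
  simp_rw [ite_sum']
  rw [Finset.sum_comm]
  refine Finset.sum_congr rfl fun ω _ => Eq.symm ?_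
  rw [Fintype.sum_eq_single (F ω) (fun f hf => by
    have hne : ¬ (F ω = f) := fun h => hf h.symm
    simp [hne])]
  by_cases h1 : C ω <;> by_cases h2 : g (F ω) = a <;> simp [h1, h2]

lemma Pr_sum_B {β φ : Type*} [Fintype β] [Fintype φ]
    (B : Ω → β) (F : Ω → φ) (f : φ) :
    ∑ b' : β, Pr p (fun ω => B ω = b' ∧ F ω = f) = Pr p (fun ω => F ω = f) := by
  unfold Pr
  rw [Finset.sum_comm]
  refine Finset.sum_congr rfl fun ω _ => ?_
  rw [Fintype.sum_eq_single (B ω) (fun b hb => by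
    have hne : ¬ (B ω = b) := fun h => hb h.symm
    simp [hne])]
  simp

lemma Pr_sum_total {β : Type*} [Fintype β] (B : Ω → β) :
    ∑ b' : β, Pr p (fun ω => B ω = b') = ∑ ω, p ω := by
  unfold Pr
  rw [Finset.sum_comm]
  refine Finset.sum_congr rfl fun ω _ => ?_
  rw [Fintype.sum_eq_single (B ω) (fun b hb => by
    have hne : ¬ (B ω = b) := fun h => hb h.symm
    simp [hne])]
  simp

lemma half_sum_bound {β : Type*} [Fintype β] (x : β → ℝ) (hx : ∑ b', x b' = 0) (b : β) :
    |x b| ≤ (1/2) * ∑ b', |x b'| := by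
  have h1 : ∑ b' ∈ Finset.univ.erase b, x b' + x b = ∑ b', x b' :=
    Finset.sum_erase_add _ _ (Finset.mem_univ b)
  have h2 : ∑ b' ∈ Finset.univ.erase b, |x b'| + |x b| = ∑ b', |x b'| :=
    Finset.sum_erase_add _ _ (Finset.mem_univ b)
  have h3 : x b = -(∑ b' ∈ Finset.univ.erase b, x b') := by
    rw [hx] at h1; linarith
  have h4 : |x b| ≤ ∑ b' ∈ Finset.univ.erase b, |x b'| := by
    rw [h3, abs_neg]
    exact Finset.abs_sum_le_sum_abs _ _
  linarith

end helpers

theorem quantitative_disentanglement_bound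
    {Ω α β φ : Type*} [Fintype Ω] [Fintype α] [Fintype β] [Fintype φ]
    (p : Ω → ℝ) (hp : ∀ ω, 0 ≤ p ω) (hsum : ∑ ω, p ω = 1)
    (A : Ω → α) (B : Ω → β) (F : Ω → φ)
    (g : φ → α) (hg : Pr p (fun ω => A ω = g (F ω)) = 1) :
    (Indep p F B →
      ∀ a b, 0 < Pr p (fun ω => A ω = a) →
        Pr p (fun ω => B ω = b ∧ A ω = a) / Pr p (fun ω => A ω = a) =
          Pr p (fun ω => B ω = b)) ∧
    (∀ a b, 0 < Pr p (fun ω => A ω = a) →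
      Pr p (fun ω => B ω = b ∧ A ω = a) / Pr p (fun ω => A ω = a) ≠
        Pr p (fun ω => B ω = b) →
      ¬ Indep p F B ∧
        ∃ f, 0 < Pr p (fun ω => F ω = f) ∧ g f = a ∧
          |Pr p (fun ω => B ω = b ∧ A ω = a) / Pr p (fun ω => A ω = a) -
              Pr p (fun ω => B ω = b)| ≤
            (1 / 2) * ∑ b',
              |Pr p (fun ω => B ω = b' ∧ F ω = f) / Pr p (fun ω => F ω = f) -
                Pr p (fun ω => B ω = b')|) := by
  -- the "bad" set is null
  have hnul : ∀ ω, p ω ≠ 0 → A ω = g (F ω) := by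
    intro ω hω
    by_contra hc
    have hlt : Pr p (fun ω => A ω = g (F ω)) < ∑ ω, p ω := by
      refine Finset.sum_lt_sum (fun i _ => ?_) ⟨ω, Finset.mem_univ ω, ?_⟩
      · by_cases h : A i = g (F i) <;> simp [h, hp i]
      · simp only [hc, if_false]
        exact lt_of_le_of_ne (hp ω) (Ne.symm hω)
    rw [hg, hsum] at hlt
    exact lt_irrefl 1 hlt
  have hAC : ∀ (C : Ω → Prop) (a' : α), Pr p (fun ω => C ω ∧ A ω = a') =
      ∑ f, if g f = a' then Pr p (fun ω => C ω ∧ F ω = f) else 0 := by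
    intro C a'
    rw [← Pr_fiber p F g C a']
    exact Pr_congr p fun ω hω => by rw [hnul ω hω]
  have hA1 : ∀ a' : α, Pr p (fun ω => A ω = a') =
      ∑ f, if g f = a' then Pr p (fun ω => F ω = f) else 0 := by
    intro a'
    have h1 : Pr p (fun ω => A ω = a') = Pr p (fun ω => True ∧ A ω = a') :=
      Pr_congr p fun ω _ => by simp
    rw [h1, hAC (fun _ => True) a']
    exact Finset.sum_congr rfl fun f _ => by
      rw [show Pr p (fun ω => True ∧ F ω = f) = Pr p (fun ω => F ω = f) from
        Pr_congr p fun ω _ => by simp]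
  have part1 : Indep p F B →
      ∀ a b, 0 < Pr p (fun ω => A ω = a) →
        Pr p (fun ω => B ω = b ∧ A ω = a) / Pr p (fun ω => A ω = a) =
          Pr p (fun ω => B ω = b) := by
    intro hI a b ha
    have hnum : Pr p (fun ω => B ω = b ∧ A ω = a) =
        Pr p (fun ω => B ω = b) * Pr p (fun ω => A ω = a) := by
      rw [hAC (fun ω => B ω = b) a, hA1 a, Finset.mul_sum]
      refine Finset.sum_congr rfl fun f _ => ?_
      rw [show Pr p (fun ω => B ω = b ∧ F ω = f) =
          Pr p (fun ω => F ω = f) * Pr p (fun ω => B ω = b) from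
        (Pr_congr p fun ω _ => and_comm).trans (hI f b)]
      by_cases h : g f = a <;> simp [h, mul_comm]
    rw [hnum, mul_div_cancel_right₀ _ (ne_of_gt ha)]
  refine ⟨part1, ?_⟩
  intro a b ha hne
  refine ⟨fun hI => hne (part1 hI a b ha), ?_⟩
  set PA := Pr p (fun ω => A ω = a) with hPAdef
  set D := Pr p (fun ω => B ω = b ∧ A ω = a) / PA - Pr p (fun ω => B ω = b) with hDdef
  have hDne : D ≠ 0 := sub_ne_zero.mpr hne
  by_contra hcon
  push_neg at hcon
  -- hcon : ∀ f, 0 < Pr p (F = f) → g f = a → (1/2) * ∑ ... < |D|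
  -- per-fiber bounds
  have hterm : ∀ f, g f = a →
      |Pr p (fun ω => B ω = b ∧ F ω = f) -
        Pr p (fun ω => B ω = b) * Pr p (fun ω => F ω = f)| ≤
      |D| * Pr p (fun ω => F ω = f) ∧
      (0 < Pr p (fun ω => F ω = f) →
        |Pr p (fun ω => B ω = b ∧ F ω = f) -
          Pr p (fun ω => B ω = b) * Pr p (fun ω => F ω = f)| <
        |D| * Pr p (fun ω => F ω = f)) := by
    intro f hgf
    have hstrict : 0 < Pr p (fun ω => F ω = f) →
        |Pr p (fun ω => B ω = b ∧ F ω = f) -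
          Pr p (fun ω => B ω = b) * Pr p (fun ω => F ω = f)| <
        |D| * Pr p (fun ω => F ω = f) := by
      intro hf
      have hfne : Pr p (fun ω => F ω = f) ≠ 0 := ne_of_gt hf
      have hxsum : ∑ b', (Pr p (fun ω => B ω = b' ∧ F ω = f) /
          Pr p (fun ω => F ω = f) - Pr p (fun ω => B ω = b')) = 0 := by
        rw [Finset.sum_sub_distrib, ← Finset.sum_div, Pr_sum_B, Pr_sum_total,
          hsum, div_self hfne]
        ring
      have h1 := half_sum_bound
        (fun b' => Pr p (fun ω => B ω = b' ∧ F ω = f) /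
          Pr p (fun ω => F ω = f) - Pr p (fun ω => B ω = b')) hxsum b
      have h2 := hcon f hf hgf
      have h3 : |Pr p (fun ω => B ω = b ∧ F ω = f) / Pr p (fun ω => F ω = f) -
          Pr p (fun ω => B ω = b)| < |D| := lt_of_le_of_lt h1 h2
      have h4 : Pr p (fun ω => B ω = b ∧ F ω = f) -
          Pr p (fun ω => B ω = b) * Pr p (fun ω => F ω = f) =
          (Pr p (fun ω => B ω = b ∧ F ω = f) / Pr p (fun ω => F ω = f) -
            Pr p (fun ω => B ω = b)) * Pr p (fun ω => F ω = f) := by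
        field_simp
      rw [h4, abs_mul, abs_of_pos hf]
      exact mul_lt_mul_of_pos_right h3 hf
    refine ⟨?_, hstrict⟩
    rcases lt_or_eq_of_le (Pr_nonneg p hp (fun ω => F ω = f)) with hf | hf
    · exact le_of_lt (hstrict hf)
    · have hBF0 : Pr p (fun ω => B ω = b ∧ F ω = f) = 0 :=
        le_antisymm (hf ▸ Pr_mono p hp fun ω h => h.2)
          (Pr_nonneg p hp _)
      rw [hBF0, ← hf]
      simp
  -- sum identities
  have hsum1 : ∑ f, (if g f = a then Pr p (fun ω => F ω = f) else 0) = PA :=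
    (hA1 a).symm
  have hsum2 : ∑ f, (if g f = a then (Pr p (fun ω => B ω = b ∧ F ω = f) -
      Pr p (fun ω => B ω = b) * Pr p (fun ω => F ω = f)) else 0) = D * PA := by
    have hsplit : ∀ f : φ, (if g f = a then (Pr p (fun ω => B ω = b ∧ F ω = f) -
        Pr p (fun ω => B ω = b) * Pr p (fun ω => F ω = f)) else 0) =
        (if g f = a then Pr p (fun ω => B ω = b ∧ F ω = f) else 0) -
        Pr p (fun ω => B ω = b) * (if g f = a then Pr p (fun ω => F ω = f) else 0) := by
      intro f; by_cases h : g f = a <;> simp [h]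
    rw [Finset.sum_congr rfl fun f _ => hsplit f, Finset.sum_sub_distrib,
      ← Finset.mul_sum, hsum1, ← hAC (fun ω => B ω = b) a, hDdef]
    field_simp
  have hex : ∃ f, g f = a ∧ 0 < Pr p (fun ω => F ω = f) := by
    by_contra h
    push_neg at h
    have hle : PA ≤ 0 := by
      rw [← hsum1]
      refine Finset.sum_nonpos fun f _ => ?_
      by_cases hgf : g f = a
      · simpa [hgf] using h f hgf
      · simp [hgf]
    linarith
  obtain ⟨f0, hgf0, hf0⟩ := hex
  have hlt : ∑ f, (if g f = a then |Pr p (fun ω => B ω = b ∧ F ω = f) -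
      Pr p (fun ω => B ω = b) * Pr p (fun ω => F ω = f)| else 0) <
      ∑ f, (if g f = a then |D| * Pr p (fun ω => F ω = f) else 0) := by
    refine Finset.sum_lt_sum (fun f _ => ?_) ⟨f0, Finset.mem_univ f0, ?_⟩
    · by_cases hgf : g f = a
      · simpa [hgf] using (hterm f hgf).1
      · simp [hgf]
    · simpa [hgf0] using (hterm f0 hgf0).2 hf0
  have hup : |D| * PA ≤ ∑ f, (if g f = a then |Pr p (fun ω => B ω = b ∧ F ω = f) -
      Pr p (fun ω => B ω = b) * Pr p (fun ω => F ω = f)| else 0) := by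
    have h1 : |D| * PA = |D * PA| := by
      rw [abs_mul, abs_of_pos ha]
    rw [h1, ← hsum2]
    refine le_trans (Finset.abs_sum_le_sum_abs _ _) (le_of_eq ?_)
    refine Finset.sum_congr rfl fun f _ => ?_
    by_cases hgf : g f = a <;> simp [hgf]
  have hrhs : ∑ f, (if g f = a then |D| * Pr p (fun ω => F ω = f) else 0) =
      |D| * PA := by
    rw [← hsum1, Finset.mul_sum]
    refine Finset.sum_congr rfl fun f _ => ?_
    by_cases hgf : g f = a <;> simp [hgf]
  rw [hrhs] at hlt
  linarith
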